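/- For all real numbers λ, μ₁, μ₂ with μ₂ > μ₁, μ₁ ≠ λ and μ₂ ≠ λ, and for every real t ≠ 0, the strict inequality (exp(−λt) − exp(−μ₁t))/(μ₁ − λ) > (exp(−λt) − exp(−μ₂t))/(μ₂ − λ) holds, with equality at t = 0. -/

import Mathlib

open Real

lemma int_rep (y : ℝ) (hy : y ≠ 0) :
    ∫ u in (0:ℝ)..1, Real.exp (-y * u) = (1 - Real.exp (-y)) / y := by
  have h := intervalIntegral.integral_comp_mul_left (f := Real.exp) (a := (0:ℝ)) (b := 1)
    (c := -y) (by simpa using hy)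
  rw [h, integral_exp]
  field_simp
  rw [smul_eq_mul]
  simp only [mul_zero, neg_zero, Real.exp_zero]
  linear_combination (1 - Real.exp (-y)) * (mul_one_div_cancel hy)

lemma key (a b : ℝ) (ha : a ≠ 0) (hb : b ≠ 0) (hab : a < b) :
    (1 - Real.exp (-b)) / b < (1 - Real.exp (-a)) / a := by
  rw [← int_rep a ha, ← int_rep b hb]
  apply intervalIntegral.integral_lt_integral_of_continuousOn_of_le_of_exists_lt one_pos
  · exact (Real.continuous_exp.comp (continuous_const.mul continuous_id)).continuousOn
  · exact (Real.continuous_exp.comp (continuous_const.mul continuous_id)).continuousOn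
  · intro x hx
    exact Real.exp_le_exp.2 (by nlinarith [hx.1])
  · exact ⟨1, ⟨by norm_num, le_rfl⟩, Real.exp_lt_exp.2 (by nlinarith)⟩

theorem stmt_6 (l μ₁ μ₂ : ℝ) (h : μ₁ < μ₂) (h1 : μ₁ ≠ l) (h2 : μ₂ ≠ l) :
    (∀ t : ℝ, t ≠ 0 →
      (Real.exp (-l * t) - Real.exp (-μ₁ * t)) / (μ₁ - l) >
        (Real.exp (-l * t) - Real.exp (-μ₂ * t)) / (μ₂ - l)) ∧
    (Real.exp (-l * 0) - Real.exp (-μ₁ * 0)) / (μ₁ - l) =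
      (Real.exp (-l * 0) - Real.exp (-μ₂ * 0)) / (μ₂ - l) := by
  constructor
  · intro t ht
    have rep : ∀ μ : ℝ, μ ≠ l →
        (Real.exp (-l * t) - Real.exp (-μ * t)) / (μ - l) =
          Real.exp (-l * t) * t * ((1 - Real.exp (-((μ - l) * t))) / ((μ - l) * t)) := by
      intro μ hμ
      have hsub : μ - l ≠ 0 := sub_ne_zero.2 hμ
      have he : Real.exp (-μ * t) = Real.exp (-l * t) * Real.exp (-((μ - l) * t)) := by
        rw [← Real.exp_add]; ring_nf
      rw [he]
      field_simp
    rw [rep μ₁ h1, rep μ₂ h2]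
    have hy1 : (μ₁ - l) * t ≠ 0 := mul_ne_zero (sub_ne_zero.2 h1) ht
    have hy2 : (μ₂ - l) * t ≠ 0 := mul_ne_zero (sub_ne_zero.2 h2) ht
    rcases ht.lt_or_gt with htn | htp
    · have hk := key ((μ₂ - l) * t) ((μ₁ - l) * t) hy2 hy1 (by nlinarith)
      have hneg : Real.exp (-l * t) * t < 0 :=
        mul_neg_of_pos_of_neg (Real.exp_pos _) htn
      exact mul_lt_mul_of_neg_left hk hneg
    · have hk := key ((μ₁ - l) * t) ((μ₂ - l) * t) hy1 hy2 (by nlinarith)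
      have hpos : 0 < Real.exp (-l * t) * t :=
        mul_pos (Real.exp_pos _) htp
      exact mul_lt_mul_of_pos_left hk hpos
  · simp
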